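/- Let n ≥ 1 and let x ∈ Bⁿ. Then c_{Bⁿ}(x,−x) = 2|x|/(1−|x|²); that is, sup_{z ∈ Sⁿ⁻¹} 2|x|/(|x−z|·|z+x|) = 2|x|/(1−|x|²). -/

import Mathlib

open Metric Set Real

/-- The triangular ratio metric of `G`. -/
noncomputable def sMet {E : Type*} [MetricSpace E] (G : Set E) (x y : E) : ℝ :=
  sSup ((fun z => dist x y / (dist x z + dist z y)) '' frontier G)

/-- The Cassinian metric of `G`. -/
noncomputable def cMet {E : Type*} [MetricSpace E] (G : Set E) (x y : E) : ℝ :=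
  sSup ((fun z => dist x y / (dist x z * dist z y)) '' frontier G)

/-- The distance ratio metric of `G`. -/
noncomputable def jMet {E : Type*} [MetricSpace E] (G : Set E) (x y : E) : ℝ :=
  Real.log (1 + dist x y / min (infDist x (frontier G)) (infDist y (frontier G)))

lemma cass_isGreatest (n : ℕ) (hn : 1 ≤ n) (x : EuclideanSpace ℝ (Fin n))
    (hx : ‖x‖ < 1) :
    IsGreatest ((fun z => 2 * ‖x‖ / (‖x - z‖ * ‖z + x‖)) ''
        Metric.sphere (0 : EuclideanSpace ℝ (Fin n)) 1) (2 * ‖x‖ / (1 - ‖x‖ ^ 2)) := by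
  have hx2 : (0:ℝ) < 1 - ‖x‖ ^ 2 := by nlinarith [norm_nonneg x]
  constructor
  · by_cases hx0 : x = 0
    · refine ⟨EuclideanSpace.single ⟨0, hn⟩ 1, by simp, ?_⟩
      simp [hx0]
    · have hnx : (0:ℝ) < ‖x‖ := norm_pos_iff.mpr hx0
      refine ⟨‖x‖⁻¹ • x, by simp [norm_smul, abs_of_nonneg, inv_mul_cancel₀ hnx.ne'], ?_⟩
      have h1 : x - ‖x‖⁻¹ • x = (1 - ‖x‖⁻¹) • x := by
        rw [sub_smul, one_smul]
      have h2 : ‖x‖⁻¹ • x + x = (‖x‖⁻¹ + 1) • x := by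
        rw [add_smul, one_smul]
      have e1 : ‖x - ‖x‖⁻¹ • x‖ = 1 - ‖x‖ := by
        rw [h1, norm_smul, Real.norm_eq_abs]
        have : (1 - ‖x‖⁻¹) = -((1 - ‖x‖) / ‖x‖) := by
          field_simp
          ring
        have hnn : (0:ℝ) ≤ (1 - ‖x‖) / ‖x‖ := div_nonneg (by linarith) hnx.le
        rw [this, abs_neg, abs_of_nonneg hnn]
        field_simp
      have e2 : ‖‖x‖⁻¹ • x + x‖ = 1 + ‖x‖ := by
        rw [h2, norm_smul, Real.norm_eq_abs, abs_of_nonneg (by positivity)]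
        field_simp
      simp only [e1, e2]
      congr 1
      ring
  · rintro v ⟨z, hz, rfl⟩
    simp only [mem_sphere_iff_norm, sub_zero] at hz
    have key : 1 - ‖x‖ ^ 2 ≤ ‖x - z‖ * ‖z + x‖ := by
      have hs : ‖x - z‖ ^ 2 = ‖x‖ ^ 2 - 2 * inner ℝ x z + 1 := by
        rw [norm_sub_sq_real, hz]; ring
      have ha : ‖z + x‖ ^ 2 = 1 + 2 * inner ℝ x z + ‖x‖ ^ 2 := by
        rw [norm_add_sq_real, hz, real_inner_comm]; ring
      have hcs : (inner ℝ x z : ℝ) ^ 2 ≤ ‖x‖ ^ 2 := by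
        have h := abs_real_inner_le_norm x z
        rw [hz, mul_one] at h
        nlinarith [sq_abs (inner ℝ x z : ℝ), abs_nonneg (inner ℝ x z : ℝ), norm_nonneg x]
      have hprod : (‖x - z‖ * ‖z + x‖) ^ 2 = (1 + ‖x‖ ^ 2) ^ 2 - 4 * (inner ℝ x z : ℝ) ^ 2 := by
        rw [mul_pow, hs, ha]; ring
      nlinarith [mul_nonneg (norm_nonneg (x - z)) (norm_nonneg (z + x)), hprod, hcs, hx2]
    have hpos : 0 < ‖x - z‖ * ‖z + x‖ := lt_of_lt_of_le hx2 key
    exact div_le_div_of_nonneg_left (by positivity) hx2 key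

/-- For `x ∈ Bⁿ`, `c_{Bⁿ}(x,−x) = 2|x|/(1−|x|²)`; that is, the supremum over
the unit sphere of `2|x|/(|x−z|·|z+x|)` equals `2|x|/(1−|x|²)`. -/
theorem cMet_antipodal (n : ℕ) (hn : 1 ≤ n) (x : EuclideanSpace ℝ (Fin n))
    (hx : x ∈ Metric.ball (0 : EuclideanSpace ℝ (Fin n)) 1) :
    cMet (Metric.ball (0 : EuclideanSpace ℝ (Fin n)) 1) x (-x) = 2 * ‖x‖ / (1 - ‖x‖ ^ 2) ∧
    sSup ((fun z => 2 * ‖x‖ / (‖x - z‖ * ‖z + x‖)) ''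
        Metric.sphere (0 : EuclideanSpace ℝ (Fin n)) 1) = 2 * ‖x‖ / (1 - ‖x‖ ^ 2) := by
  rw [mem_ball, dist_eq_norm, sub_zero] at hx
  haveI : Nontrivial (EuclideanSpace ℝ (Fin n)) := by
    refine ⟨0, EuclideanSpace.single ⟨0, hn⟩ 1, ?_⟩
    intro h
    have := congrArg norm h
    simp at this
  have hfr : frontier (Metric.ball (0 : EuclideanSpace ℝ (Fin n)) 1) =
      Metric.sphere (0 : EuclideanSpace ℝ (Fin n)) 1 := frontier_ball 0 one_ne_zero
  have hfun : (fun z : EuclideanSpace ℝ (Fin n) =>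
      dist x (-x) / (dist x z * dist z (-x))) =
      fun z => 2 * ‖x‖ / (‖x - z‖ * ‖z + x‖) := by
    funext z
    rw [dist_eq_norm, dist_eq_norm, dist_eq_norm, sub_neg_eq_add, sub_neg_eq_add]
    congr 1
    have : x + x = (2:ℝ) • x := (two_smul ℝ x).symm
    rw [this, norm_smul]
    simp
  have hg := cass_isGreatest n hn x hx
  have hsup := hg.csSup_eq
  refine ⟨?_, hsup⟩
  rw [cMet, hfr, hfun, hsup]
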